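/- Bimultiplicativity of the symbol: let A be a finite-dimensional commutative local ℂ-algebra with residue field ℂ, regarded as a normed ℂ-algebra, and let f, g, h : [0,1] → Aˣ be C¹ maps. With I(f,g) := ∫_{0 ≤ t₁ ≤ t₂ ≤ 1} f'(t₁)f(t₁)⁻¹ · g'(t₂)g(t₂)⁻¹ dt₁ dt₂, one has I(f, g·h) = I(f,g) + I(f,h) and I(f, g⁻¹) = −I(f,g); consequently exp((1/2πi)I(f,g·h)) = exp((1/2πi)I(f,g))·exp((1/2πi)I(f,h)) and exp((1/2πi)I(f,g⁻¹)) = exp((1/2πi)I(f,g))⁻¹. -/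

import Mathlib

open MeasureTheory

/-- The simplex `{0 ≤ t 1 ≤ ⋯ ≤ t k ≤ 1}` in `[0,1]^k`. -/
def orderedSimplex (k : ℕ) : Set (Fin k → ℝ) :=
  {t | (∀ i, t i ∈ Set.Icc (0 : ℝ) 1) ∧ ∀ i j : Fin k, i ≤ j → t i ≤ t j}

/-- `I(f,g) := ∫_{0 ≤ t₁ ≤ t₂ ≤ 1} f'(t₁) f(t₁)⁻¹ g'(t₂) g(t₂)⁻¹ dt₁ dt₂`,
the iterated integral of the logarithmic derivatives. -/
noncomputable def logDerivPairing {A : Type*} [NormedCommRing A] [NormedAlgebra ℂ A]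
    (f f' g g' : ℝ → A) : A :=
  ∫ t in orderedSimplex 2,
    f' (t 0) * Ring.inverse (f (t 0)) * (g' (t 1) * Ring.inverse (g (t 1)))

lemma isClosed_orderedSimplex (k : ℕ) : IsClosed (orderedSimplex k) := by
  have : orderedSimplex k =
      (⋂ i, (fun t : Fin k → ℝ => t i) ⁻¹' Set.Icc 0 1) ∩
        ⋂ (i : Fin k) (j : Fin k) (_ : i ≤ j), {t : Fin k → ℝ | t i ≤ t j} := by
    ext t
    simp [orderedSimplex, Set.mem_iInter]
  rw [this]
  refine IsClosed.inter (isClosed_iInter fun i => ?_)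
    (isClosed_iInter fun i => isClosed_iInter fun j => isClosed_iInter fun _ => ?_)
  · exact isClosed_Icc.preimage (continuous_apply i)
  · exact isClosed_le (continuous_apply i) (continuous_apply j)

lemma isCompact_orderedSimplex (k : ℕ) : IsCompact (orderedSimplex k) := by
  refine (isCompact_Icc (a := (0 : Fin k → ℝ)) (b := 1)).of_isClosed_subset
    (isClosed_orderedSimplex k) ?_
  intro t ht
  constructor
  · intro i; exact (ht.1 i).1
  · intro i; exact (ht.1 i).2

lemma contOn_integrand {A : Type*} [NormedCommRing A] [NormedAlgebra ℂ A]
    [FiniteDimensional ℂ A]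
    (f f' g g' : ℝ → A)
    (hf : ∀ t ∈ Set.Icc (0 : ℝ) 1, IsUnit (f t))
    (hg : ∀ t ∈ Set.Icc (0 : ℝ) 1, IsUnit (g t))
    (hf' : ContinuousOn f' (Set.Icc 0 1)) (hg' : ContinuousOn g' (Set.Icc 0 1))
    (hfc : ContinuousOn f (Set.Icc 0 1)) (hgc : ContinuousOn g (Set.Icc 0 1)) :
    ContinuousOn
      (fun t : Fin 2 → ℝ =>
        f' (t 0) * Ring.inverse (f (t 0)) * (g' (t 1) * Ring.inverse (g (t 1))))
      (orderedSimplex 2) := by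
  have hc : CompleteSpace A := FiniteDimensional.complete ℂ A
  have h0 : ContinuousOn (fun t : Fin 2 → ℝ => t 0) (orderedSimplex 2) :=
    (continuous_apply 0).continuousOn
  have h1 : ContinuousOn (fun t : Fin 2 → ℝ => t 1) (orderedSimplex 2) :=
    (continuous_apply 1).continuousOn
  have hm0 : ∀ t ∈ orderedSimplex 2, t 0 ∈ Set.Icc (0 : ℝ) 1 := fun t ht => ht.1 0
  have hm1 : ∀ t ∈ orderedSimplex 2, t 1 ∈ Set.Icc (0 : ℝ) 1 := fun t ht => ht.1 1
  have hinv : ∀ (u : ℝ → A), (∀ s ∈ Set.Icc (0:ℝ) 1, IsUnit (u s)) →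
      ContinuousOn u (Set.Icc 0 1) →
      ∀ (p : (Fin 2 → ℝ) → ℝ), ContinuousOn p (orderedSimplex 2) →
      (∀ t ∈ orderedSimplex 2, p t ∈ Set.Icc (0:ℝ) 1) →
      ContinuousOn (fun t => Ring.inverse (u (p t))) (orderedSimplex 2) := by
    intro u hu huc p hp hpm t ht
    obtain ⟨v, hv⟩ := hu (p t) (hpm t ht)
    have hca : ContinuousAt Ring.inverse (u (p t)) := by
      rw [← hv]; exact NormedRing.inverse_continuousAt v
    show ContinuousWithinAt (Ring.inverse ∘ u ∘ p) (orderedSimplex 2) t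
    exact ContinuousAt.comp_continuousWithinAt (f := u ∘ p) hca ((huc.comp hp hpm) t ht)
  exact ((hf'.comp h0 hm0).mul (hinv f hf hfc _ h0 hm0)).mul
    ((hg'.comp h1 hm1).mul (hinv g hg hgc _ h1 hm1))

theorem symbol_bimultiplicative
    (A : Type*) [NormedCommRing A] [NormedAlgebra ℂ A] [FiniteDimensional ℂ A]
    [IsLocalRing A]
    (hres : Function.Bijective ((IsLocalRing.residue A).comp (algebraMap ℂ A)))
    (f f' g g' h h' : ℝ → A)
    (hf : ∀ t ∈ Set.Icc (0 : ℝ) 1, IsUnit (f t))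
    (hg : ∀ t ∈ Set.Icc (0 : ℝ) 1, IsUnit (g t))
    (hh : ∀ t ∈ Set.Icc (0 : ℝ) 1, IsUnit (h t))
    (hf' : ContinuousOn f' (Set.Icc 0 1)) (hg' : ContinuousOn g' (Set.Icc 0 1))
    (hh' : ContinuousOn h' (Set.Icc 0 1))
    (hfd : ∀ t ∈ Set.Icc (0 : ℝ) 1, HasDerivWithinAt f (f' t) (Set.Icc 0 1) t)
    (hgd : ∀ t ∈ Set.Icc (0 : ℝ) 1, HasDerivWithinAt g (g' t) (Set.Icc 0 1) t)
    (hhd : ∀ t ∈ Set.Icc (0 : ℝ) 1, HasDerivWithinAt h (h' t) (Set.Icc 0 1) t) :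
    (logDerivPairing f f' (fun t => g t * h t) (fun t => g' t * h t + g t * h' t) =
        logDerivPairing f f' g g' + logDerivPairing f f' h h') ∧
    (logDerivPairing f f' (fun t => Ring.inverse (g t))
        (fun t => -(g' t * Ring.inverse (g t) * Ring.inverse (g t))) =
      -logDerivPairing f f' g g') ∧
    (NormedSpace.exp (algebraMap ℂ A (2 * Real.pi * Complex.I)⁻¹ *
        logDerivPairing f f' (fun t => g t * h t) (fun t => g' t * h t + g t * h' t)) =
      NormedSpace.exp (algebraMap ℂ A (2 * Real.pi * Complex.I)⁻¹ *
          logDerivPairing f f' g g') *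
        NormedSpace.exp (algebraMap ℂ A (2 * Real.pi * Complex.I)⁻¹ *
          logDerivPairing f f' h h')) ∧
    (NormedSpace.exp (algebraMap ℂ A (2 * Real.pi * Complex.I)⁻¹ *
        logDerivPairing f f' (fun t => Ring.inverse (g t))
          (fun t => -(g' t * Ring.inverse (g t) * Ring.inverse (g t)))) =
      Ring.inverse (NormedSpace.exp (algebraMap ℂ A (2 * Real.pi * Complex.I)⁻¹ *
        logDerivPairing f f' g g'))) := by
  have hc : CompleteSpace A := FiniteDimensional.complete ℂ A
  let +nondep : NormedAlgebra ℚ A := .restrictScalars ℚ ℂ A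
  have hfc : ContinuousOn f (Set.Icc 0 1) := fun t ht => (hfd t ht).continuousWithinAt
  have hgc : ContinuousOn g (Set.Icc 0 1) := fun t ht => (hgd t ht).continuousWithinAt
  have hhc : ContinuousOn h (Set.Icc 0 1) := fun t ht => (hhd t ht).continuousWithinAt
  have hmeas : MeasurableSet (orderedSimplex 2) := (isClosed_orderedSimplex 2).measurableSet
  have hIg : IntegrableOn
      (fun t : Fin 2 → ℝ =>
        f' (t 0) * Ring.inverse (f (t 0)) * (g' (t 1) * Ring.inverse (g (t 1))))
      (orderedSimplex 2) :=
    (contOn_integrand f f' g g' hf hg hf' hg' hfc hgc).integrableOn_compact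
      (isCompact_orderedSimplex 2)
  have hIh : IntegrableOn
      (fun t : Fin 2 → ℝ =>
        f' (t 0) * Ring.inverse (f (t 0)) * (h' (t 1) * Ring.inverse (h (t 1))))
      (orderedSimplex 2) :=
    (contOn_integrand f f' h h' hf hh hf' hh' hfc hhc).integrableOn_compact
      (isCompact_orderedSimplex 2)
  -- the multiplicativity statement
  have key1 : logDerivPairing f f' (fun t => g t * h t)
      (fun t => g' t * h t + g t * h' t) =
      logDerivPairing f f' g g' + logDerivPairing f f' h h' := by
    unfold logDerivPairing
    rw [← integral_add hIg hIh]
    apply setIntegral_congr_fun hmeas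
    intro t ht
    have hgu := hg (t 1) (ht.1 1)
    have hhu := hh (t 1) (ht.1 1)
    simp only
    have : Ring.inverse (g (t 1) * h (t 1)) =
        Ring.inverse (g (t 1)) * Ring.inverse (h (t 1)) := by
      rw [Ring.mul_inverse_rev, mul_comm]
    rw [this]
    have e1 : (g' (t 1) * h (t 1) + g (t 1) * h' (t 1)) *
        (Ring.inverse (g (t 1)) * Ring.inverse (h (t 1))) =
        g' (t 1) * Ring.inverse (g (t 1)) + h' (t 1) * Ring.inverse (h (t 1)) := by
      have hg1 : g (t 1) * Ring.inverse (g (t 1)) = 1 := Ring.mul_inverse_cancel _ hgu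
      have hh1 : h (t 1) * Ring.inverse (h (t 1)) = 1 := Ring.mul_inverse_cancel _ hhu
      ring_nf
      ring_nf at hg1 hh1
      calc g' (t 1) * h (t 1) * Ring.inverse (g (t 1)) * Ring.inverse (h (t 1)) +
            g (t 1) * h' (t 1) * Ring.inverse (g (t 1)) * Ring.inverse (h (t 1))
          = g' (t 1) * Ring.inverse (g (t 1)) * (h (t 1) * Ring.inverse (h (t 1))) +
            h' (t 1) * Ring.inverse (h (t 1)) * (g (t 1) * Ring.inverse (g (t 1))) := by ring
        _ = _ := by rw [hg1, hh1]; ring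
    rw [e1, mul_add]
  have key2 : logDerivPairing f f' (fun t => Ring.inverse (g t))
      (fun t => -(g' t * Ring.inverse (g t) * Ring.inverse (g t))) =
      -logDerivPairing f f' g g' := by
    unfold logDerivPairing
    rw [← integral_neg]
    apply setIntegral_congr_fun hmeas
    intro t ht
    have hgu := hg (t 1) (ht.1 1)
    simp only
    have hinv2 : Ring.inverse (Ring.inverse (g (t 1))) = g (t 1) := by
      obtain ⟨v, hv⟩ := hgu
      rw [← hv, Ring.inverse_unit, Ring.inverse_unit, inv_inv]
    rw [hinv2]
    have hg1 : Ring.inverse (g (t 1)) * g (t 1) = 1 := Ring.inverse_mul_cancel _ hgu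
    have : -(g' (t 1) * Ring.inverse (g (t 1)) * Ring.inverse (g (t 1))) * g (t 1) =
        -(g' (t 1) * Ring.inverse (g (t 1))) := by
      calc -(g' (t 1) * Ring.inverse (g (t 1)) * Ring.inverse (g (t 1))) * g (t 1)
          = -(g' (t 1) * Ring.inverse (g (t 1)) * (Ring.inverse (g (t 1)) * g (t 1))) := by ring
        _ = _ := by rw [hg1]; ring
    rw [this]
    ring
  refine ⟨key1, key2, ?_, ?_⟩
  · rw [key1, mul_add, NormedSpace.exp_add]
  · rw [key2, mul_neg, ← Ring.inverse_exp]
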